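/- arXiv:2303.10837 — 2 statements merged into one kernel-verified Lean document; each statement's English description precedes it below -/
import Mathlib

section
/- Let f : 𝒟 → ℝ be a function on datasets with sensitivity Δf = sup over adjacent pairs D₁, D₂ of |f(D₁) − f(D₂)| finite, and let ε > 0. The mechanism M that on input D outputs f(D) + Z, where Z is Laplace-distributed with location 0 and scale b = Δf/ε, satisfies ε-differential privacy. -/
open MeasureTheory

/-- The Laplace distribution with location `0` and scale `b`: the measure on `ℝ` with
density `x ↦ (1/(2b)) · exp (−|x|/b)` with respect to Lebesgue measure. -/
noncomputable def laplaceMeasure (b : ℝ) : Measure ℝ :=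
  volume.withDensity fun x => ENNReal.ofReal ((1 / (2 * b)) * Real.exp (-|x| / b))

/-- A mechanism `M`, assigning to each dataset a measure on the output space `Ω`,
satisfies `ε`-differential privacy with respect to the adjacency relation `Adj` if for all
adjacent datasets `D₁, D₂` and all measurable output sets `O`,
`M D₁ O ≤ exp ε · M D₂ O`. -/
def DiffPrivate {𝒟 : Type*} {Ω : Type*} [MeasurableSpace Ω]
    (Adj : 𝒟 → 𝒟 → Prop) (M : 𝒟 → Measure Ω) (ε : ℝ) : Prop :=
  ∀ D₁ D₂, Adj D₁ D₂ → ∀ O : Set Ω, MeasurableSet O →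
    M D₁ O ≤ ENNReal.ofReal (Real.exp ε) * M D₂ O

/-- Let `f : 𝒟 → ℝ` have sensitivity `Δf`, the (finite) supremum over
adjacent pairs `D₁, D₂` of `|f D₁ − f D₂|`, and let `ε > 0`.  The Laplace mechanism
that on input `D` outputs `f D + Z`, where `Z` is Laplace with location `0` and
scale `b = Δf / ε`, satisfies `ε`-differential privacy. -/
theorem laplace_mechanism_diffPrivate {𝒟 : Type*} (Adj : 𝒟 → 𝒟 → Prop)
    (hsym : Symmetric Adj) (f : 𝒟 → ℝ) (Δf : ℝ)
    (hΔ : IsLUB {r : ℝ | ∃ D₁ D₂, Adj D₁ D₂ ∧ r = |f D₁ - f D₂|} Δf)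
    (ε : ℝ) (hε : 0 < ε) :
    DiffPrivate Adj
      (fun D => (laplaceMeasure (Δf / ε)).map fun z => f D + z) ε := by
  intro D₁ D₂ hadj O hO
  set b : ℝ := Δf / ε with hb
  have hmemb : |f D₁ - f D₂| ≤ Δf := hΔ.1 ⟨D₁, D₂, hadj, rfl⟩
  have hΔ0 : 0 ≤ Δf := le_trans (abs_nonneg _) hmemb
  rcases eq_or_lt_of_le hΔ0 with h0 | hpos
  · have hz : laplaceMeasure b = 0 := by
      rw [hb, ← h0]
      simp [laplaceMeasure]
    simp only [hz, Measure.map_zero]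
    simp
  · have hbpos : 0 < b := div_pos hpos hε
    have hΔeq : Δf = ε * b := by rw [hb]; field_simp
    have hmap : ∀ c : ℝ, (laplaceMeasure b).map (fun z => c + z)
        = volume.withDensity (fun x => ENNReal.ofReal ((1 / (2 * b)) * Real.exp (-|x - c| / b))) := by
      intro c
      have hmeas : Measurable (fun x : ℝ => ENNReal.ofReal ((1 / (2 * b)) * Real.exp (-|x - c| / b))) := by
        apply Measurable.ennreal_ofReal
        fun_prop
      ext s hs
      rw [laplaceMeasure, Measure.map_apply (measurable_const_add c) hs,
        withDensity_apply _ (hs.preimage (measurable_const_add c)),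
        withDensity_apply _ hs]
      have hmp : MeasurePreserving (fun z : ℝ => c + z) volume volume :=
        measurePreserving_add_left volume c
      have hemb : MeasurableEmbedding (fun z : ℝ => c + z) :=
        (MeasurableEquiv.addLeft c).measurableEmbedding
      have := hmp.setLIntegral_comp_preimage_emb hemb
        (fun x => ENNReal.ofReal ((1 / (2 * b)) * Real.exp (-|x - c| / b))) s
      simpa using this
    simp only [hmap]
    have hpt : ∀ x : ℝ,
        ENNReal.ofReal ((1 / (2 * b)) * Real.exp (-|x - f D₁| / b))
          ≤ ENNReal.ofReal (Real.exp ε) * ENNReal.ofReal ((1 / (2 * b)) * Real.exp (-|x - f D₂| / b)) := by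
      intro x
      rw [← ENNReal.ofReal_mul (Real.exp_nonneg ε)]
      apply ENNReal.ofReal_le_ofReal
      have h1 : -|x - f D₁| / b ≤ ε + -|x - f D₂| / b := by
        have habs : |x - f D₂| - |x - f D₁| ≤ |f D₁ - f D₂| := by
          have := abs_sub_abs_le_abs_sub (x - f D₂) (x - f D₁)
          calc |x - f D₂| - |x - f D₁| ≤ |(x - f D₂) - (x - f D₁)| := this
            _ = |f D₁ - f D₂| := by rw [show (x - f D₂) - (x - f D₁) = f D₁ - f D₂ by ring]
        have : |x - f D₂| - |x - f D₁| ≤ ε * b := by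
          calc |x - f D₂| - |x - f D₁| ≤ |f D₁ - f D₂| := habs
            _ ≤ Δf := hmemb
            _ = ε * b := hΔeq
        have h2 : -|x - f D₁| ≤ ε * b + -|x - f D₂| := by linarith
        calc -|x - f D₁| / b ≤ (ε * b + -|x - f D₂|) / b :=
              (div_le_div_iff_of_pos_right hbpos).mpr h2
          _ = ε + -|x - f D₂| / b := by field_simp
      have hexp : Real.exp (-|x - f D₁| / b) ≤ Real.exp ε * Real.exp (-|x - f D₂| / b) := by
        rw [← Real.exp_add]
        exact Real.exp_le_exp.mpr h1
      have hc : 0 ≤ 1 / (2 * b) := by positivity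
      calc (1 / (2 * b)) * Real.exp (-|x - f D₁| / b)
          ≤ (1 / (2 * b)) * (Real.exp ε * Real.exp (-|x - f D₂| / b)) :=
            mul_le_mul_of_nonneg_left hexp hc
        _ = Real.exp ε * ((1 / (2 * b)) * Real.exp (-|x - f D₂| / b)) := by ring
    rw [withDensity_apply _ hO, withDensity_apply _ hO]
    calc ∫⁻ x in O, ENNReal.ofReal ((1 / (2 * b)) * Real.exp (-|x - f D₁| / b)) ∂volume
        ≤ ∫⁻ x in O, ENNReal.ofReal (Real.exp ε) * ENNReal.ofReal ((1 / (2 * b)) * Real.exp (-|x - f D₂| / b)) ∂volume :=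
          lintegral_mono fun x => hpt x
      _ = ENNReal.ofReal (Real.exp ε) * ∫⁻ x in O, ENNReal.ofReal ((1 / (2 * b)) * Real.exp (-|x - f D₂| / b)) ∂volume :=
          lintegral_const_mul' _ _ ENNReal.ofReal_ne_top
end

section
/- Let f : 𝒟 → ℝ^d be a function on datasets with ℓ₁-sensitivity Δf = sup over adjacent pairs D₁, D₂ of ‖f(D₁) − f(D₂)‖₁ finite, and let ε > 0. The mechanism M that on input D outputs f(D) + (Z₁, …, Z_d), where Z₁, …, Z_d are independent Laplace random variables with location 0 and scale b = Δf/ε, satisfies ε-differential privacy. -/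
open MeasureTheory
open scoped ENNReal

namespace LaplaceAux

instance laplace_sigmaFinite (b : ℝ) : SigmaFinite (laplaceMeasure b) := by
  rw [laplaceMeasure]
  exact MeasureTheory.SigmaFinite.withDensity_ofReal _

lemma measurable_laplace_density (b : ℝ) :
    Measurable fun t : ℝ => ENNReal.ofReal ((1 / (2 * b)) * Real.exp (-|t| / b)) := by
  fun_prop

lemma measurable_prod_comp {d : ℕ} {h : Fin d → ℝ → ℝ≥0∞} (hm : ∀ i, Measurable (h i)) :
    Measurable fun y : Fin d → ℝ => ∏ i, h i (y i) :=
  Finset.measurable_prod _ fun i _ => (hm i).comp (measurable_pi_apply i)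

lemma lmarginal_prod {d : ℕ} (μ : Measure ℝ) [SigmaFinite μ]
    (h : Fin d → ℝ → ℝ≥0∞) (hm : ∀ i, Measurable (h i)) (s : Finset (Fin d)) :
    ∀ x : Fin d → ℝ,
      (∫⋯∫⁻_s, (fun y => ∏ i, h i (y i)) ∂(fun _ => μ)) x
        = (∏ i ∈ s, ∫⁻ t, h i t ∂μ) * ∏ i ∈ sᶜ, h i (x i) := by
  induction s using Finset.induction with
  | empty => intro x; simp
  | @insert i s hi ih =>
    intro x
    rw [lmarginal_insert _ (measurable_prod_comp hm) hi]
    have hisc : i ∈ sᶜ := Finset.mem_compl.mpr hi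
    have hupd : ∀ xᵢ : ℝ, (∫⋯∫⁻_s, (fun y => ∏ j, h j (y j)) ∂(fun _ => μ))
          (Function.update x i xᵢ)
        = (∏ j ∈ s, ∫⁻ t, h j t ∂μ) * (h i xᵢ * ∏ j ∈ sᶜ.erase i, h j (x j)) := by
      intro xᵢ
      rw [ih (Function.update x i xᵢ)]
      congr 1
      rw [← Finset.mul_prod_erase _ _ hisc, Function.update_self]
      congr 1
      refine Finset.prod_congr rfl fun j hj => ?_
      rw [Function.update_of_ne (Finset.ne_of_mem_erase hj)]
    simp only [hupd]
    rw [lintegral_const_mul _ ((hm i).mul_const _), lintegral_mul_const _ (hm i),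
      Finset.prod_insert hi, Finset.compl_insert]
    ring

lemma pi_laplace {d : ℕ} (b : ℝ) :
    (Measure.pi fun _ : Fin d => laplaceMeasure b)
      = (volume : Measure (Fin d → ℝ)).withDensity
          (fun x => ∏ i, ENNReal.ofReal ((1 / (2 * b)) * Real.exp (-|x i| / b))) := by
  have hg := measurable_laplace_density b
  refine Measure.pi_eq fun s hs => ?_
  rw [withDensity_apply _ (MeasurableSet.univ_pi hs)]
  have hind : (Set.univ.pi s).indicator
      (fun x : Fin d → ℝ => ∏ i, ENNReal.ofReal ((1 / (2 * b)) * Real.exp (-|x i| / b)))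
      = fun x => ∏ i, (s i).indicator
          (fun t => ENNReal.ofReal ((1 / (2 * b)) * Real.exp (-|t| / b))) (x i) := by
    funext x
    by_cases hx : x ∈ Set.univ.pi s
    · rw [Set.indicator_of_mem hx]
      exact Finset.prod_congr rfl fun i _ =>
        (Set.indicator_of_mem (hx i (Set.mem_univ i))
          fun t => ENNReal.ofReal ((1 / (2 * b)) * Real.exp (-|t| / b))).symm
    · rw [Set.indicator_of_notMem hx]
      rw [Set.mem_univ_pi] at hx
      push_neg at hx
      obtain ⟨i, hxi⟩ := hx
      exact (Finset.prod_eq_zero (Finset.mem_univ i)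
        (by rw [Set.indicator_of_notMem hxi])).symm
  rw [← lintegral_indicator (MeasurableSet.univ_pi hs), hind, volume_pi,
    lintegral_eq_lmarginal_univ (0 : Fin d → ℝ),
    lmarginal_prod _ _ (fun i => hg.indicator (hs i)) Finset.univ (0 : Fin d → ℝ)]
  simp only [Finset.compl_univ, Finset.prod_empty, mul_one]
  refine Finset.prod_congr rfl fun i _ => ?_
  rw [lintegral_indicator (hs i), laplaceMeasure, withDensity_apply _ (hs i)]

lemma density_shift_le {d : ℕ} {b : ℝ} (hb : 0 < b) (y v : Fin d → ℝ) :
    (∏ i, ENNReal.ofReal ((1 / (2 * b)) * Real.exp (-|(y - v) i| / b)))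
      ≤ ENNReal.ofReal (Real.exp ((∑ i, |v i|) / b))
        * ∏ i, ENNReal.ofReal ((1 / (2 * b)) * Real.exp (-|y i| / b)) := by
  have h1 : ∀ a : Fin d → ℝ,
      (∏ i, ENNReal.ofReal ((1 / (2 * b)) * Real.exp (-|a i| / b)))
        = ENNReal.ofReal (∏ i, (1 / (2 * b)) * Real.exp (-|a i| / b)) := fun a =>
    (ENNReal.ofReal_prod_of_nonneg fun i _ => by positivity).symm
  rw [h1 (y - v), h1 y, ← ENNReal.ofReal_mul (Real.exp_nonneg _)]
  apply ENNReal.ofReal_le_ofReal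
  have hprod : ∀ a : Fin d → ℝ, (∏ i, (1 / (2 * b)) * Real.exp (-|a i| / b))
      = (1 / (2 * b)) ^ d * Real.exp (∑ i, -|a i| / b) := by
    intro a
    rw [Finset.prod_mul_distrib, Finset.prod_const, Real.exp_sum]
    simp [Finset.card_univ]
  rw [hprod (y - v), hprod y]
  have hre : Real.exp ((∑ i, |v i|) / b) * ((1 / (2 * b)) ^ d * Real.exp (∑ i, -|y i| / b))
      = (1 / (2 * b)) ^ d * Real.exp ((∑ i, |v i|) / b + ∑ i, -|y i| / b) := by
    rw [Real.exp_add]; ring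
  rw [hre]
  apply mul_le_mul_of_nonneg_left _ (by positivity)
  rw [Real.exp_le_exp, Finset.sum_div, ← Finset.sum_add_distrib]
  refine Finset.sum_le_sum fun i _ => ?_
  have h2 : -|(y - v) i| ≤ |v i| + -|y i| := by
    have h3 := abs_sub_abs_le_abs_sub (y i) ((y - v) i)
    have h4 : y i - (y - v) i = v i := by simp [Pi.sub_apply]
    rw [h4] at h3
    linarith
  calc -|(y - v) i| / b ≤ (|v i| + -|y i|) / b := by gcongr
    _ = |v i| / b + -|y i| / b := add_div _ _ _

end LaplaceAux

/-- Let `f : 𝒟 → ℝ^d` have ℓ₁-sensitivity `Δf`, the (finite) supremum over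
adjacent pairs `D₁, D₂` of `‖f D₁ − f D₂‖₁ = ∑ i, |f D₁ i − f D₂ i|`, and let `ε > 0`.
The mechanism that on input `D` outputs `f D + (Z₁, …, Z_d)`, with `Z₁, …, Z_d`
independent Laplace variables of location `0` and scale `b = Δf / ε` (i.e. the image
under `z ↦ f D + z` of the `d`-fold product of Laplace measures),
satisfies `ε`-differential privacy. -/
theorem laplace_mechanism_vector_diffPrivate {𝒟 : Type*} (d : ℕ)
    (Adj : 𝒟 → 𝒟 → Prop) (hsym : Symmetric Adj)
    (f : 𝒟 → (Fin d → ℝ)) (Δf : ℝ)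
    (hΔ : IsLUB {r : ℝ | ∃ D₁ D₂, Adj D₁ D₂ ∧
      r = ∑ i : Fin d, |f D₁ i - f D₂ i|} Δf)
    (ε : ℝ) (hε : 0 < ε) :
    DiffPrivate Adj
      (fun D => (Measure.pi fun _ : Fin d => laplaceMeasure (Δf / ε)).map
        fun z => f D + z) ε := by
  intro D₁ D₂ hadj O hO
  have hmemb : (∑ i : Fin d, |f D₁ i - f D₂ i|) ≤ Δf :=
    hΔ.1 ⟨D₁, D₂, hadj, rfl⟩
  have hsum0 : 0 ≤ ∑ i : Fin d, |f D₁ i - f D₂ i| :=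
    Finset.sum_nonneg fun i _ => abs_nonneg _
  have h1exp : (1 : ℝ≥0∞) ≤ ENNReal.ofReal (Real.exp ε) :=
    ENNReal.one_le_ofReal.mpr (Real.one_le_exp hε.le)
  rcases eq_or_lt_of_le (le_trans hsum0 hmemb) with hΔ0 | hΔpos
  · -- degenerate case `Δf = 0` : then `f D₁ = f D₂` on adjacent pairs
    have hf : f D₁ = f D₂ := by
      have hz : ∑ i : Fin d, |f D₁ i - f D₂ i| = 0 :=
        le_antisymm (hΔ0 ▸ hmemb) hsum0
      funext i
      have h0 := (Finset.sum_eq_zero_iff_of_nonneg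
        (fun i _ => abs_nonneg (f D₁ i - f D₂ i))).mp hz i (Finset.mem_univ i)
      have := abs_eq_zero.mp h0
      linarith
    simp only [hf]
    exact le_mul_of_one_le_left zero_le h1exp
  · set b := Δf / ε with hbdef
    have hb : 0 < b := div_pos hΔpos hε
    have hm₁ : Measurable fun z : Fin d → ℝ => f D₁ + z := measurable_id.const_add _
    have hm₂ : Measurable fun z : Fin d → ℝ => f D₂ + z := measurable_id.const_add _
    rw [Measure.map_apply hm₁ hO, Measure.map_apply hm₂ hO]
    set v : Fin d → ℝ := f D₁ - f D₂ with hvdef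
    set S : Set (Fin d → ℝ) := (fun z => f D₂ + z) ⁻¹' O with hSdef
    have hSm : MeasurableSet S := hm₂ hO
    have hpre : (fun z : Fin d → ℝ => f D₁ + z) ⁻¹' O = (fun z => z + v) ⁻¹' S := by
      ext z
      have hz : f D₂ + (z + v) = f D₁ + z := by rw [hvdef]; abel
      simp only [Set.mem_preimage, hSdef, hz]
    set ρ : (Fin d → ℝ) → ℝ≥0∞ :=
      fun x => ∏ i, ENNReal.ofReal ((1 / (2 * b)) * Real.exp (-|x i| / b)) with hρdef
    have hρm : Measurable ρ :=
      LaplaceAux.measurable_prod_comp fun i => LaplaceAux.measurable_laplace_density b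
    have hTm : MeasurableSet ((fun z : Fin d → ℝ => z + v) ⁻¹' S) :=
      (measurable_add_const v) hSm
    rw [hpre, LaplaceAux.pi_laplace b, withDensity_apply _ hTm, withDensity_apply _ hSm,
      ← lintegral_indicator hTm, ← lintegral_indicator hSm]
    have hεb : (∑ i, |v i|) / b ≤ ε := by
      have hs : (∑ i, |v i|) ≤ Δf := by
        calc (∑ i, |v i|) = ∑ i : Fin d, |f D₁ i - f D₂ i| := by
              refine Finset.sum_congr rfl fun i _ => ?_
              rw [hvdef]; simp [Pi.sub_apply]
          _ ≤ Δf := hmemb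
      have hΔb : Δf / b = ε := by
        rw [hbdef]
        field_simp
      calc (∑ i, |v i|) / b ≤ Δf / b := by gcongr
        _ = ε := hΔb
    have hpt : ∀ y : Fin d → ℝ, ρ (y - v) ≤ ENNReal.ofReal (Real.exp ε) * ρ y := by
      intro y
      calc ρ (y - v) ≤ ENNReal.ofReal (Real.exp ((∑ i, |v i|) / b)) * ρ y :=
            LaplaceAux.density_shift_le hb y v
        _ ≤ ENNReal.ofReal (Real.exp ε) * ρ y := by
            gcongr
    calc ∫⁻ x, ((fun z : Fin d → ℝ => z + v) ⁻¹' S).indicator ρ x ∂volume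
        = ∫⁻ x, (S.indicator fun y => ρ (y - v)) (x + v) ∂volume := by
          refine lintegral_congr fun x => ?_
          by_cases hx : x + v ∈ S
          · rw [Set.indicator_of_mem hx, Set.indicator_of_mem (by exact hx)]
            simp
          · rw [Set.indicator_of_notMem hx, Set.indicator_of_notMem (by exact hx)]
      _ = ∫⁻ y, (S.indicator fun y => ρ (y - v)) y ∂volume :=
          lintegral_add_right_eq_self _ v
      _ ≤ ∫⁻ y, (S.indicator fun y => ENNReal.ofReal (Real.exp ε) * ρ y) y ∂volume := by
          refine lintegral_mono fun y => ?_
          by_cases hy : y ∈ S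
          · rw [Set.indicator_of_mem hy, Set.indicator_of_mem hy]
            exact hpt y
          · rw [Set.indicator_of_notMem hy, Set.indicator_of_notMem hy]
      _ = ENNReal.ofReal (Real.exp ε) * ∫⁻ y, S.indicator ρ y ∂volume := by
          rw [← lintegral_const_mul _ (hρm.indicator hSm)]
          refine lintegral_congr fun y => ?_
          by_cases hy : y ∈ S
          · rw [Set.indicator_of_mem hy, Set.indicator_of_mem hy]
          · rw [Set.indicator_of_notMem hy, Set.indicator_of_notMem hy, mul_zero]
end
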